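/- The degree-3 graph G'_3 on 8 vertices {x, f(x), y, f(y), z, f(z), w, f(w)}, where f(y), f(z), f(w) are adjacent to {z,f(z)}, {w,f(w)}, {y,f(y)} respectively and both x and f(x) are adjacent to y, z, w, satisfies Property R*: for every vertex v, V(G'_3) = {v} ∪ {f(v)} ∪ N(f(v)) ∪ f(N(v)). -/

import Mathlib

open SimpleGraph

/-- The degree-3 base graph `G'₃` on the 8 vertices
`0 = x, 1 = f x, 2 = y, 3 = f y, 4 = z, 5 = f z, 6 = w, 7 = f w`:
`f y`, `f z`, `f w` are adjacent to `{z, f z}`, `{w, f w}`, `{y, f y}` respectively,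
and both `x` and `f x` are adjacent to `y`, `z`, `w`. -/
def G3 : SimpleGraph (Fin 8) :=
  SimpleGraph.fromRel (fun a b =>
    (a, b) ∈ [((3 : Fin 8), (4 : Fin 8)), (3, 5), (5, 6), (5, 7), (7, 2), (7, 3),
      (0, 2), (0, 4), (0, 6), (1, 2), (1, 4), (1, 6)])

/-- The involution swapping each pair `(x, f x)`, `(y, f y)`, `(z, f z)`, `(w, f w)`. -/
def f3 : Fin 8 → Fin 8 := ![1, 0, 3, 2, 5, 4, 7, 6]

set_option synthInstance.maxHeartbeats 400000 in
set_option synthInstance.maxSize 2048 in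
lemma aux_stmt12 : ∀ v u : Fin 8,
    u = v ∨ u = f3 v ∨ G3.Adj (f3 v) u ∨ ∃ x, G3.Adj v x ∧ f3 x = u := by
  unfold G3 f3
  simp only [SimpleGraph.fromRel_adj]
  decide

/-- The degree-3 graph `G'₃` satisfies Property R* via the characterization: for every
vertex `v`, `V(G'₃) = {v} ∪ {f v} ∪ N(f v) ∪ f(N(v))`. -/
theorem stmt_12 :
    ∀ v : Fin 8, (Set.univ : Set (Fin 8)) =
      {v} ∪ {f3 v} ∪ G3.neighborSet (f3 v) ∪ (f3 '' G3.neighborSet v) := by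
  intro v
  ext u
  simp only [Set.mem_univ, Set.mem_union, Set.mem_singleton_iff, mem_neighborSet,
    Set.mem_image, true_iff]
  have := aux_stmt12 v u
  tauto
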